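/- Let (μ, η, Δ, ε) be a commutative Frobenius algebra in a symmetric monoidal category, and suppose (Δ', ε') is another comonoid on the same object forming a Frobenius algebra with (μ, η). Then there exists an invertible phase α (an invertible endomorphism with μ∘(α⊗id) = α∘μ) such that Δ' = (α ⊗ id)∘Δ and ε' = ε∘α⁻¹. -/

import Mathlib

open CategoryTheory MonoidalCategory


private theorem frob_key {C : Type*} [Category C] [MonoidalCategory C]
    (A : C) (μ : A ⊗ A ⟶ A) (η : 𝟙_ C ⟶ A) (Δ Δ' : A ⟶ A ⊗ A) (ε : A ⟶ 𝟙_ C)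
    (hunitl : (λ_ A).inv ≫ η ▷ A ≫ μ = 𝟙 A)
    (hunitr : (ρ_ A).inv ≫ A ◁ η ≫ μ = 𝟙 A)
    (hcounitl : Δ ≫ ε ▷ A ≫ (λ_ A).hom = 𝟙 A)
    (hfrob₁ : A ◁ Δ ≫ (α_ A A A).inv ≫ μ ▷ A = μ ≫ Δ)
    (hfrob₁' : A ◁ Δ' ≫ (α_ A A A).inv ≫ μ ▷ A = μ ≫ Δ')
    (hfrob₂' : Δ' ▷ A ≫ (α_ A A A).hom ≫ A ◁ μ = μ ≫ Δ') :
    Δ ≫ (Δ' ≫ A ◁ ε ≫ (ρ_ A).hom) ▷ A = Δ' := by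
  have hcl : Δ ≫ ε ▷ A = (λ_ A).inv := by
    rw [← cancel_mono (λ_ A).hom]; simpa using hcounitl
  have hur : A ◁ η ≫ μ = (ρ_ A).hom := by
    rw [← cancel_epi (ρ_ A).inv]; simpa using hunitr
  have hul : η ▷ A ≫ μ = (λ_ A).hom := by
    rw [← cancel_epi (λ_ A).inv]; simpa using hunitl
  set a : A ⟶ A := Δ' ≫ A ◁ ε ≫ (ρ_ A).hom with ha
  -- the snake
  have S2 : A ◁ (η ≫ Δ) ≫ (α_ A A A).inv ≫ (μ ≫ ε) ▷ A = (ρ_ A).hom ≫ (λ_ A).inv := by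
    calc A ◁ (η ≫ Δ) ≫ (α_ A A A).inv ≫ (μ ≫ ε) ▷ A
        = A ◁ η ≫ (A ◁ Δ ≫ (α_ A A A).inv ≫ μ ▷ A) ≫ ε ▷ A := by
          simp [MonoidalCategory.whiskerLeft_comp, comp_whiskerRight]
      _ = A ◁ η ≫ μ ≫ Δ ≫ ε ▷ A := by rw [hfrob₁]; simp
      _ = (ρ_ A).hom ≫ (λ_ A).inv := by rw [hcl, ← Category.assoc, hur]
  -- zigzag form of a
  have hazig : a = (λ_ A).inv ≫ (η ≫ Δ') ▷ A ≫ (α_ A A A).hom ≫ A ◁ (μ ≫ ε) ≫ (ρ_ A).hom := by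
    symm
    calc (λ_ A).inv ≫ (η ≫ Δ') ▷ A ≫ (α_ A A A).hom ≫ A ◁ (μ ≫ ε) ≫ (ρ_ A).hom
        = (λ_ A).inv ≫ η ▷ A ≫ (Δ' ▷ A ≫ (α_ A A A).hom ≫ A ◁ μ) ≫ A ◁ ε ≫ (ρ_ A).hom := by
          simp [MonoidalCategory.whiskerLeft_comp, comp_whiskerRight]
      _ = (λ_ A).inv ≫ η ▷ A ≫ (μ ≫ Δ') ≫ A ◁ ε ≫ (ρ_ A).hom := by rw [hfrob₂']
      _ = a := by
          rw [ha]
          slice_lhs 2 3 => rw [hul]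
          simp
  -- a maps the unprimed cup to the primed cup
  have hca : (η ≫ Δ) ≫ a ▷ A = η ≫ Δ' := by
    calc (η ≫ Δ) ≫ a ▷ A
        = 𝟙 (𝟙_ C) ⊗≫ (𝟙_ C ◁ (η ≫ Δ) ≫ (η ≫ Δ') ▷ (A ⊗ A)) ⊗≫
            A ◁ ((α_ A A A).inv ≫ (μ ≫ ε) ▷ A) ⊗≫ 𝟙 (A ⊗ A) := by
          rw [hazig]; monoidal
      _ = 𝟙 (𝟙_ C) ⊗≫ ((η ≫ Δ') ▷ (𝟙_ C) ≫ (A ⊗ A) ◁ (η ≫ Δ)) ⊗≫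
            A ◁ ((α_ A A A).inv ≫ (μ ≫ ε) ▷ A) ⊗≫ 𝟙 (A ⊗ A) := by
          rw [whisker_exchange]
      _ = (η ≫ Δ') ⊗≫ A ◁ (A ◁ (η ≫ Δ) ≫ (α_ A A A).inv ≫ (μ ≫ ε) ▷ A) ⊗≫ 𝟙 (A ⊗ A) := by
          monoidal
      _ = (η ≫ Δ') ⊗≫ A ◁ ((ρ_ A).hom ≫ (λ_ A).inv) ⊗≫ 𝟙 (A ⊗ A) := by rw [S2]
      _ = η ≫ Δ' := by monoidal
  -- a is a right phase
  have hmul : μ ≫ a = A ◁ a ≫ μ := by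
    calc μ ≫ a
        = A ◁ Δ' ≫ (α_ A A A).inv ≫ (μ ▷ A ≫ A ◁ ε) ≫ (ρ_ A).hom := by
          rw [ha, ← Category.assoc, ← hfrob₁']; simp
      _ = A ◁ Δ' ≫ (α_ A A A).inv ≫ ((A ⊗ A) ◁ ε ≫ μ ▷ (𝟙_ C)) ≫ (ρ_ A).hom := by
          rw [whisker_exchange]
      _ = A ◁ a ≫ μ := by rw [ha]; monoidal
  -- expressions for Δ and Δ' via the Frobenius law
  have hΔ : (ρ_ A).inv ≫ A ◁ (η ≫ Δ) ≫ (α_ A A A).inv ≫ μ ▷ A = Δ := by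
    calc (ρ_ A).inv ≫ A ◁ (η ≫ Δ) ≫ (α_ A A A).inv ≫ μ ▷ A
        = (ρ_ A).inv ≫ A ◁ η ≫ (A ◁ Δ ≫ (α_ A A A).inv ≫ μ ▷ A) := by
          simp [MonoidalCategory.whiskerLeft_comp]
      _ = Δ := by
          rw [hfrob₁]
          slice_lhs 2 3 => rw [hur]
          simp
  have hΔ' : (ρ_ A).inv ≫ A ◁ (η ≫ Δ') ≫ (α_ A A A).inv ≫ μ ▷ A = Δ' := by
    calc (ρ_ A).inv ≫ A ◁ (η ≫ Δ') ≫ (α_ A A A).inv ≫ μ ▷ A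
        = (ρ_ A).inv ≫ A ◁ η ≫ (A ◁ Δ' ≫ (α_ A A A).inv ≫ μ ▷ A) := by
          simp [MonoidalCategory.whiskerLeft_comp]
      _ = Δ' := by
          rw [hfrob₁']
          slice_lhs 2 3 => rw [hur]
          simp
  -- main computation
  calc Δ ≫ a ▷ A
      = (ρ_ A).inv ≫ A ◁ (η ≫ Δ) ≫ (α_ A A A).inv ≫ (μ ≫ a) ▷ A := by
        conv_lhs => rw [← hΔ]
        simp only [comp_whiskerRight, Category.assoc]
    _ = (ρ_ A).inv ≫ A ◁ (η ≫ Δ) ≫ (α_ A A A).inv ≫ (A ◁ a ≫ μ) ▷ A := by rw [hmul]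
    _ = (ρ_ A).inv ≫ A ◁ ((η ≫ Δ) ≫ a ▷ A) ≫ (α_ A A A).inv ≫ μ ▷ A := by
        simp only [comp_whiskerRight, MonoidalCategory.whiskerLeft_comp, Category.assoc]
        rw [← associator_inv_naturality_middle_assoc]
    _ = Δ' := by rw [hca, hΔ']

/-- If `(μ, η, Δ, ε)` is a commutative Frobenius algebra in a symmetric monoidal category
and `(Δ', ε')` is another comonoid forming a Frobenius algebra with `(μ, η)`, then there is an
invertible phase `α` with `Δ' = (α ⊗ id) ∘ Δ` and `ε' = ε ∘ α⁻¹`. -/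
theorem stmt8 {C : Type*} [Category C] [MonoidalCategory C] [SymmetricCategory C]
    (A : C) (μ : A ⊗ A ⟶ A) (η : 𝟙_ C ⟶ A) (Δ Δ' : A ⟶ A ⊗ A) (ε ε' : A ⟶ 𝟙_ C)
    -- commutative monoid
    (hassoc : (α_ A A A).hom ≫ (𝟙 A ⊗ₘ μ) ≫ μ = (μ ⊗ₘ 𝟙 A) ≫ μ)
    (hunitl : (λ_ A).inv ≫ (η ⊗ₘ 𝟙 A) ≫ μ = 𝟙 A)
    (hunitr : (ρ_ A).inv ≫ (𝟙 A ⊗ₘ η) ≫ μ = 𝟙 A)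
    (hcomm : (β_ A A).hom ≫ μ = μ)
    -- cocommutative comonoid (Δ, ε)
    (hcoassoc : Δ ≫ (Δ ⊗ₘ 𝟙 A) ≫ (α_ A A A).hom = Δ ≫ (𝟙 A ⊗ₘ Δ))
    (hcounitl : Δ ≫ (ε ⊗ₘ 𝟙 A) ≫ (λ_ A).hom = 𝟙 A)
    (hcounitr : Δ ≫ (𝟙 A ⊗ₘ ε) ≫ (ρ_ A).hom = 𝟙 A)
    (hcocomm : Δ ≫ (β_ A A).hom = Δ)
    -- Frobenius law for (μ, η, Δ, ε)
    (hfrob₁ : (𝟙 A ⊗ₘ Δ) ≫ (α_ A A A).inv ≫ (μ ⊗ₘ 𝟙 A) = μ ≫ Δ)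
    (hfrob₂ : (Δ ⊗ₘ 𝟙 A) ≫ (α_ A A A).hom ≫ (𝟙 A ⊗ₘ μ) = μ ≫ Δ)
    -- cocommutative comonoid (Δ', ε')
    (hcoassoc' : Δ' ≫ (Δ' ⊗ₘ 𝟙 A) ≫ (α_ A A A).hom = Δ' ≫ (𝟙 A ⊗ₘ Δ'))
    (hcounitl' : Δ' ≫ (ε' ⊗ₘ 𝟙 A) ≫ (λ_ A).hom = 𝟙 A)
    (hcounitr' : Δ' ≫ (𝟙 A ⊗ₘ ε') ≫ (ρ_ A).hom = 𝟙 A)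
    (hcocomm' : Δ' ≫ (β_ A A).hom = Δ')
    -- Frobenius law for (μ, η, Δ', ε')
    (hfrob₁' : (𝟙 A ⊗ₘ Δ') ≫ (α_ A A A).inv ≫ (μ ⊗ₘ 𝟙 A) = μ ≫ Δ')
    (hfrob₂' : (Δ' ⊗ₘ 𝟙 A) ≫ (α_ A A A).hom ≫ (𝟙 A ⊗ₘ μ) = μ ≫ Δ') :
    ∃ a ainv : A ⟶ A,
      a ≫ ainv = 𝟙 A ∧ ainv ≫ a = 𝟙 A ∧
      (a ⊗ₘ 𝟙 A) ≫ μ = μ ≫ a ∧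
      Δ' = Δ ≫ (a ⊗ₘ 𝟙 A) ∧ ε' = ainv ≫ ε := by
  simp only [id_tensorHom, tensorHom_id] at hunitl hunitr hcounitl hcounitr hcounitl' hcounitr' hfrob₁ hfrob₂ hfrob₁' hfrob₂' ⊢
  set a : A ⟶ A := Δ' ≫ A ◁ ε ≫ (ρ_ A).hom with ha
  set ainv : A ⟶ A := Δ ≫ A ◁ ε' ≫ (ρ_ A).hom with hainv
  have hkey1 : Δ ≫ a ▷ A = Δ' :=
    frob_key A μ η Δ Δ' ε hunitl hunitr hcounitl hfrob₁ hfrob₁' hfrob₂'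
  have hkey2 : Δ' ≫ ainv ▷ A = Δ :=
    frob_key A μ η Δ' Δ ε' hunitl hunitr hcounitl' hfrob₁' hfrob₁ hfrob₂
  -- a is a right phase
  have hmul : μ ≫ a = A ◁ a ≫ μ := by
    calc μ ≫ a
        = A ◁ Δ' ≫ (α_ A A A).inv ≫ (μ ▷ A ≫ A ◁ ε) ≫ (ρ_ A).hom := by
          rw [ha, ← Category.assoc, ← hfrob₁']; simp
      _ = A ◁ Δ' ≫ (α_ A A A).inv ≫ ((A ⊗ A) ◁ ε ≫ μ ▷ (𝟙_ C)) ≫ (ρ_ A).hom := by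
          rw [whisker_exchange]
      _ = A ◁ a ≫ μ := by rw [ha]; monoidal
  refine ⟨a, ainv, ?_, ?_, ?_, ?_, ?_⟩
  · -- a ≫ ainv = 𝟙
    calc a ≫ ainv
        = Δ' ≫ (A ◁ ε ≫ ainv ▷ (𝟙_ C)) ≫ (ρ_ A).hom := by rw [ha]; monoidal
      _ = Δ' ≫ (ainv ▷ A ≫ A ◁ ε) ≫ (ρ_ A).hom := by rw [← whisker_exchange]
      _ = (Δ' ≫ ainv ▷ A) ≫ A ◁ ε ≫ (ρ_ A).hom := by simp
      _ = 𝟙 A := by rw [hkey2, hcounitr]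
  · -- ainv ≫ a = 𝟙
    calc ainv ≫ a
        = Δ ≫ (A ◁ ε' ≫ a ▷ (𝟙_ C)) ≫ (ρ_ A).hom := by rw [hainv]; monoidal
      _ = Δ ≫ (a ▷ A ≫ A ◁ ε') ≫ (ρ_ A).hom := by rw [← whisker_exchange]
      _ = (Δ ≫ a ▷ A) ≫ A ◁ ε' ≫ (ρ_ A).hom := by simp
      _ = 𝟙 A := by rw [hkey1, hcounitr']
  · -- phase
    conv_lhs => rw [← hcomm]
    rw [← Category.assoc, BraidedCategory.braiding_naturality_left, Category.assoc, ← hmul,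
      ← Category.assoc, hcomm]
  · exact hkey1.symm
  · -- ε' = ainv ≫ ε
    symm
    calc ainv ≫ ε
        = Δ ≫ (A ◁ ε' ≫ ε ▷ (𝟙_ C)) ≫ (λ_ (𝟙_ C)).hom := by rw [hainv]; monoidal
      _ = Δ ≫ (ε ▷ A ≫ (𝟙_ C) ◁ ε') ≫ (λ_ (𝟙_ C)).hom := by rw [← whisker_exchange]
      _ = (Δ ≫ ε ▷ A ≫ (λ_ A).hom) ≫ ε' := by monoidal
      _ = ε' := by rw [hcounitl]; simp
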